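/- Consider the proxy-Lagrangians ℒ_θ, ℒ_λ : Θ × Δ^{m+1} → ℝ. Suppose sequences θ^(1),…,θ^(T) ∈ Θ and λ^(1),…,λ^(T) ∈ Δ^{m+1} are generated as follows, starting from the (m+1)×(m+1) matrix M^(1) with all entries equal to 1/(m+1): at each step t, λ^(t) is a stationary distribution of M^(t) (M^(t) λ^(t) = λ^(t)); θ^(t) satisfies ℒ_θ(θ^(t), λ^(t)) ≤ inf_{θ*∈Θ} ℒ_θ(θ*, λ^(t)) + ρ; Δ^(t) := (0, g₁(θ^(t)),…,g_m(θ^(t))) is the gradient of ℒ_λ(θ^(t),·) w.r.t. λ; M̃^(t+1) := M^(t) ⊙ exp(η Δ^(t) (λ^(t))ᵀ) (element-wise product and exponential), and M^(t+1) is obtained by normalizing each column of M̃^(t+1) to sum to 1; with step size η := √((m+1) ln(m+1) / (T B_Δ²)) where B_Δ ≥ max_t ‖Δ^(t)‖_∞. Then: (1/T) Σ_{t=1}^T ℒ_θ(θ^(t),λ^(t)) − inf_{θ*∈Θ} (1/T) Σ_{t=1}^T ℒ_θ(θ*,λ^(t)) ≤ ρ, and max_{M*∈ℳ} (1/T) Σ_{t=1}^T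 ℒ_λ(θ^(t), M*λ^(t)) − (1/T) Σ_{t=1}^T ℒ_λ(θ^(t),λ^(t)) ≤ 2 B_Δ √((m+1) ln(m+1) / T). -/

import Mathlib

/-- **Convergence of the oracle-based proxy-Lagrangian algorithm** (Lemma C.5 /
Algorithm 4).  The `θ`-player uses a `ρ`-approximate optimization oracle for
`ℒ_θ(·, λ^(t))`, while the `λ`-player runs swap-regret-minimizing matrix
multiplicative updates, playing a stationary distribution `λ^(t)` of the
left-stochastic matrix `M^(t)`.  Then the `θ`-player's average external regret
is at most `ρ`, and the `λ`-player's average swap regret is at most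
`2 B_Δ √((m+1) ln(m+1) / T)`. -/
private lemma exp_le_quadratic {x : ℝ} (hx : |x| ≤ 1) : Real.exp x ≤ 1 + x + x ^ 2 := by
  have h := Real.exp_bound hx (n := 2) (by norm_num)
  have h2 : ∑ i ∈ Finset.range 2, x ^ i / (Nat.factorial i) = 1 + x := by
    simp [Finset.sum_range_succ]
  rw [h2] at h
  norm_num [Nat.factorial] at h
  have h3 := abs_le.1 h
  have hx2 : |x| ^ 2 = x ^ 2 := sq_abs x
  nlinarith [sq_nonneg x]

private lemma hedge_regret (n T : ℕ) (η : ℝ) (hη : 0 < η)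
    (v : ℕ → Fin (n + 1) → ℝ) (b : ℕ → ℝ)
    (hb : ∀ t < T, ∀ i, |v t i| ≤ b t)
    (hx : ∀ t < T, ∀ i, |η * v t i| ≤ 1)
    (i0 : Fin (n + 1)) :
    ∑ t ∈ Finset.range T, v t i0
      - ∑ t ∈ Finset.range T, ∑ i,
          (Real.exp (η * ∑ s ∈ Finset.range t, v s i)
            / ∑ k, Real.exp (η * ∑ s ∈ Finset.range t, v s k)) * v t i
    ≤ Real.log ((n : ℝ) + 1) / η + η * ∑ t ∈ Finset.range T, b t ^ 2 := by
  set S : ℕ → Fin (n + 1) → ℝ := fun t i => ∑ s ∈ Finset.range t, v s i with hS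
  set W : ℕ → ℝ := fun t => ∑ k, Real.exp (η * S t k) with hW
  set G : ℕ → ℝ := fun t => ∑ i, (Real.exp (η * S t i) / W t) * v t i with hG
  have hWpos : ∀ t, 0 < W t := fun t =>
    Finset.sum_pos (fun k _ => Real.exp_pos _) Finset.univ_nonempty
  have key : ∀ t < T,
      Real.log (W (t + 1)) - Real.log (W t) ≤ η * G t + η ^ 2 * b t ^ 2 := by
    intro t ht
    have hq1 : ∑ i, Real.exp (η * S t i) / W t = 1 := by
      rw [← Finset.sum_div, div_self (hWpos t).ne']
    have hWsucc : W (t + 1) = ∑ k, Real.exp (η * S t k) * Real.exp (η * v t k) := by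
      simp only [hW, hS]
      refine Finset.sum_congr rfl fun k _ => ?_
      rw [Finset.sum_range_succ, mul_add, Real.exp_add]
    have hbt : 0 ≤ b t := le_trans (abs_nonneg _) (hb t ht i0)
    have step1 : W (t + 1) / W t
        ≤ ∑ i, (Real.exp (η * S t i) / W t) * (1 + η * v t i + (η * v t i) ^ 2) := by
      rw [hWsucc, Finset.sum_div]
      refine Finset.sum_le_sum fun i _ => ?_
      have heq : Real.exp (η * S t i) * Real.exp (η * v t i) / W t
          = (Real.exp (η * S t i) / W t) * Real.exp (η * v t i) := by ring
      rw [heq]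
      exact mul_le_mul_of_nonneg_left (exp_le_quadratic (hx t ht i)) (by positivity)
    have step2 : ∑ i, (Real.exp (η * S t i) / W t) * (1 + η * v t i + (η * v t i) ^ 2)
        = 1 + η * G t + η ^ 2 * ∑ i, (Real.exp (η * S t i) / W t) * v t i ^ 2 := by
      have h1 : ∀ i : Fin (n + 1),
          (Real.exp (η * S t i) / W t) * (1 + η * v t i + (η * v t i) ^ 2)
          = Real.exp (η * S t i) / W t
            + η * ((Real.exp (η * S t i) / W t) * v t i)
            + η ^ 2 * ((Real.exp (η * S t i) / W t) * v t i ^ 2) := fun i => by ring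
      simp_rw [h1, Finset.sum_add_distrib, ← Finset.mul_sum, hq1]
      rfl
    have step3 : ∑ i, (Real.exp (η * S t i) / W t) * v t i ^ 2 ≤ b t ^ 2 := by
      calc ∑ i, (Real.exp (η * S t i) / W t) * v t i ^ 2
          ≤ ∑ i, (Real.exp (η * S t i) / W t) * b t ^ 2 := by
            refine Finset.sum_le_sum fun i _ => ?_
            refine mul_le_mul_of_nonneg_left ?_ (by positivity)
            calc v t i ^ 2 = |v t i| ^ 2 := (sq_abs _).symm
              _ ≤ b t ^ 2 := by
                have := hb t ht i
                nlinarith [abs_nonneg (v t i)]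
        _ = b t ^ 2 := by rw [← Finset.sum_mul, hq1, one_mul]
    have hratio : W (t + 1) / W t ≤ 1 + η * G t + η ^ 2 * b t ^ 2 := by
      refine le_trans step1 ?_
      rw [step2]
      nlinarith [step3, sq_nonneg η]
    have hposratio : 0 < W (t + 1) / W t := div_pos (hWpos _) (hWpos t)
    have hpos1 : 0 < 1 + η * G t + η ^ 2 * b t ^ 2 := lt_of_lt_of_le hposratio hratio
    have hlog : Real.log (W (t + 1)) - Real.log (W t) = Real.log (W (t + 1) / W t) := by
      rw [Real.log_div (hWpos _).ne' (hWpos t).ne']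
    rw [hlog]
    calc Real.log (W (t + 1) / W t) ≤ Real.log (1 + η * G t + η ^ 2 * b t ^ 2) :=
          Real.log_le_log hposratio hratio
      _ ≤ η * G t + η ^ 2 * b t ^ 2 := by
          linarith [Real.log_le_sub_one_of_pos hpos1]
  have tel : Real.log (W T) - Real.log (W 0)
      ≤ η * ∑ t ∈ Finset.range T, G t + η ^ 2 * ∑ t ∈ Finset.range T, b t ^ 2 := by
    rw [← Finset.sum_range_sub (fun t => Real.log (W t)) T]
    calc ∑ t ∈ Finset.range T, (Real.log (W (t + 1)) - Real.log (W t))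
        ≤ ∑ t ∈ Finset.range T, (η * G t + η ^ 2 * b t ^ 2) :=
          Finset.sum_le_sum fun t ht => key t (Finset.mem_range.1 ht)
      _ = _ := by rw [Finset.sum_add_distrib, ← Finset.mul_sum, ← Finset.mul_sum]
  have hW0 : W 0 = (n : ℝ) + 1 := by
    simp [hW, hS]
  have hWT : η * S T i0 ≤ Real.log (W T) := by
    have hle : Real.exp (η * S T i0) ≤ W T :=
      Finset.single_le_sum (f := fun k => Real.exp (η * S T k))
        (fun k _ => (Real.exp_pos _).le) (Finset.mem_univ i0)
    calc η * S T i0 = Real.log (Real.exp (η * S T i0)) := (Real.log_exp _).symm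
      _ ≤ Real.log (W T) := Real.log_le_log (Real.exp_pos _) hle
  have main : η * S T i0 - Real.log ((n : ℝ) + 1)
      ≤ η * ∑ t ∈ Finset.range T, G t + η ^ 2 * ∑ t ∈ Finset.range T, b t ^ 2 := by
    rw [hW0] at tel
    linarith
  have h2 : η * (S T i0 - ∑ t ∈ Finset.range T, G t)
      ≤ η * (Real.log ((n : ℝ) + 1) / η + η * ∑ t ∈ Finset.range T, b t ^ 2) := by
    rw [mul_add, mul_div_cancel₀ _ hη.ne', mul_sub]
    nlinarith [main]
  exact le_of_mul_le_mul_left h2 hη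


theorem oracle_proxy_lagrangian_convergence
    {Θ : Type*} {m : ℕ}
    (g0 : Θ → ℝ) (g gt : Fin m → Θ → ℝ)
    (Lθ Llam : Θ → (Fin (m + 1) → ℝ) → ℝ)
    (hLθ : ∀ θ l, Lθ θ l = l 0 * g0 θ + ∑ i : Fin m, l i.succ * gt i θ)
    (hLlam : ∀ θ l, Llam θ l = ∑ i : Fin m, l i.succ * g i θ)
    (T : ℕ) (hT : 0 < T) (ρ BΔ : ℝ)
    (η : ℝ)
    (hη : η = Real.sqrt (((m : ℝ) + 1) * Real.log ((m : ℝ) + 1) / (T * BΔ ^ 2)))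
    (θs : ℕ → Θ) (lams : ℕ → Fin (m + 1) → ℝ)
    (Ms : ℕ → Fin (m + 1) → Fin (m + 1) → ℝ)
    (Δs : ℕ → Fin (m + 1) → ℝ)
    -- `Δ^(t) = (0, g₁(θ^(t)), …, g_m(θ^(t)))` is the gradient of `ℒ_λ(θ^(t),·)`
    (hΔ : ∀ t, Δs t = Matrix.vecCons (0 : ℝ) fun i : Fin m => g i (θs t))
    (hMinit : ∀ i j, Ms 0 i j = 1 / ((m : ℝ) + 1))
    -- `λ^(t)` is a stationary distribution of `M^(t)`
    (hstat : ∀ t < T, lams t ∈ stdSimplex ℝ (Fin (m + 1)) ∧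
      ∀ i, ∑ j, Ms t i j * lams t j = lams t i)
    -- `θ^(t)` is a `ρ`-approximate minimizer of `ℒ_θ(·, λ^(t))`
    (horacle : ∀ t < T, ∀ θ' : Θ, Lθ (θs t) (lams t) ≤ Lθ θ' (lams t) + ρ)
    -- `B_Δ` bounds `‖Δ^(t)‖_∞`
    (hBΔ : ∀ t < T, ∀ j, |Δs t j| ≤ BΔ)
    -- multiplicative update followed by column normalization
    (hupdate : ∀ t < T, ∀ i j,
      Ms (t + 1) i j = (Ms t i j * Real.exp (η * (Δs t i * lams t j)))
        / ∑ k, Ms t k j * Real.exp (η * (Δs t k * lams t j))) :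
    -- the `θ`-player's external regret is at most `ρ`
    (∀ θ' : Θ,
      (1 / (T : ℝ)) * ∑ t ∈ Finset.range T, Lθ (θs t) (lams t)
        - (1 / (T : ℝ)) * ∑ t ∈ Finset.range T, Lθ θ' (lams t) ≤ ρ) ∧
    -- the `λ`-player's swap regret is small
    (∀ M' : Fin (m + 1) → Fin (m + 1) → ℝ,
      (∀ j, (fun i => M' i j) ∈ stdSimplex ℝ (Fin (m + 1))) →
      (1 / (T : ℝ)) * ∑ t ∈ Finset.range T,
          Llam (θs t) (fun i => ∑ j, M' i j * lams t j)
        - (1 / (T : ℝ)) * ∑ t ∈ Finset.range T, Llam (θs t) (lams t)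
      ≤ 2 * BΔ * Real.sqrt (((m : ℝ) + 1) * Real.log ((m : ℝ) + 1) / T)) := by
  have hT' : (0 : ℝ) < T := by exact_mod_cast hT
  constructor
  · -- θ-player regret
    intro θ'
    have hsum : ∑ t ∈ Finset.range T, Lθ (θs t) (lams t)
        ≤ (∑ t ∈ Finset.range T, Lθ θ' (lams t)) + T * ρ := by
      calc ∑ t ∈ Finset.range T, Lθ (θs t) (lams t)
          ≤ ∑ t ∈ Finset.range T, (Lθ θ' (lams t) + ρ) :=
            Finset.sum_le_sum fun t ht => horacle t (Finset.mem_range.1 ht) θ'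
        _ = _ := by
            rw [Finset.sum_add_distrib, Finset.sum_const, Finset.card_range,
              nsmul_eq_mul]
    have h1 : (1 / (T : ℝ)) * ∑ t ∈ Finset.range T, Lθ (θs t) (lams t)
        ≤ (1 / (T : ℝ)) * ((∑ t ∈ Finset.range T, Lθ θ' (lams t)) + T * ρ) := by
      apply mul_le_mul_of_nonneg_left hsum
      positivity
    have h2 : (1 / (T : ℝ)) * ((∑ t ∈ Finset.range T, Lθ θ' (lams t)) + T * ρ)
        - (1 / (T : ℝ)) * ∑ t ∈ Finset.range T, Lθ θ' (lams t) = ρ := by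
      field_simp
      ring
    linarith
  · -- λ-player swap regret
    intro M' hM'
    by_cases hm : m = 0
    · subst hm
      have h0 : ∀ θ l, Llam θ l = 0 := fun θ l => by
        rw [hLlam]; simp
      simp only [h0, Finset.sum_const, Finset.card_range, smul_zero, mul_zero,
        sub_zero, Nat.cast_zero]
      rw [show ((0 : ℝ) + 1) * Real.log ((0 : ℝ) + 1) / T = 0 by
        simp [Real.log_one]]
      simp
    have hB0 : 0 ≤ BΔ := le_trans (abs_nonneg _) (hBΔ 0 hT 0)
    have hlnn : ∀ t < T, ∀ j, 0 ≤ lams t j := fun t ht j => (hstat t ht).1.1 j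
    have hlsum : ∀ t < T, ∑ j, lams t j = 1 := fun t ht => (hstat t ht).1.2
    have hlle1 : ∀ t < T, ∀ j, lams t j ≤ 1 := fun t ht j => by
      rw [← hlsum t ht]
      exact Finset.single_le_sum (fun k _ => hlnn t ht k) (Finset.mem_univ j)
    have hΔ0 : ∀ t, Δs t 0 = 0 := fun t => by rw [hΔ]; rfl
    have hΔsucc : ∀ t (i : Fin m), Δs t i.succ = g i (θs t) := fun t i => by
      rw [hΔ]; exact Matrix.cons_val_succ _ _ _
    by_cases hBz : BΔ = 0
    · have hg0 : ∀ t < T, ∀ i : Fin m, g i (θs t) = 0 := by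
        intro t ht i
        have h := hBΔ t ht i.succ
        rw [hΔsucc, hBz] at h
        exact abs_eq_zero.1 (le_antisymm h (abs_nonneg _))
      have hzero : ∀ t < T, ∀ l : Fin (m + 1) → ℝ, Llam (θs t) l = 0 := by
        intro t ht l
        rw [hLlam]
        refine Finset.sum_eq_zero fun i _ => by rw [hg0 t ht i, mul_zero]
      rw [Finset.sum_congr rfl fun t ht => hzero t (Finset.mem_range.1 ht) _,
        Finset.sum_congr rfl fun t ht => hzero t (Finset.mem_range.1 ht) _]
      simp [hBz]
    have hBpos : 0 < BΔ := lt_of_le_of_ne hB0 (Ne.symm hBz)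
    set K := ((m : ℝ) + 1) * Real.log ((m : ℝ) + 1) with hK
    have hm1 : (1 : ℝ) < (m : ℝ) + 1 := by
      have : 1 ≤ m := Nat.one_le_iff_ne_zero.2 hm
      have : (1 : ℝ) ≤ (m : ℝ) := by exact_mod_cast this
      linarith
    have hKpos : 0 < K := mul_pos (by linarith) (Real.log_pos hm1)
    -- helper: bound on |Llam| for subprobability vectors
    have habs : ∀ t < T, ∀ l : Fin (m + 1) → ℝ,
        (∀ i, 0 ≤ l i) → (∑ i, l i ≤ 1) → |Llam (θs t) l| ≤ BΔ := by
      intro t ht l hl hls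
      rw [hLlam]
      calc |∑ i : Fin m, l i.succ * g i (θs t)|
          ≤ ∑ i : Fin m, |l i.succ * g i (θs t)| := Finset.abs_sum_le_sum_abs _ _
        _ ≤ ∑ i : Fin m, l i.succ * BΔ := by
            refine Finset.sum_le_sum fun i _ => ?_
            rw [abs_mul, abs_of_nonneg (hl _)]
            refine mul_le_mul_of_nonneg_left ?_ (hl _)
            rw [← hΔsucc t i]
            exact hBΔ t ht i.succ
        _ = (∑ i : Fin m, l i.succ) * BΔ := (Finset.sum_mul _ _ _).symm
        _ ≤ 1 * BΔ := by
            refine mul_le_mul_of_nonneg_right ?_ hB0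
            calc ∑ i : Fin m, l i.succ ≤ l 0 + ∑ i : Fin m, l i.succ := by
                  linarith [hl 0]
              _ = ∑ i : Fin (m + 1), l i := (Fin.sum_univ_succ l).symm
              _ ≤ 1 := hls
        _ = BΔ := one_mul _
    by_cases hKT : (T : ℝ) ≤ K
    · -- trivial case: the regret bound exceeds the trivial bound 2BΔ
      have hs1 : (1 : ℝ) ≤ Real.sqrt (K / T) := by
        rw [show (1 : ℝ) = Real.sqrt 1 from Real.sqrt_one.symm]
        exact Real.sqrt_le_sqrt ((le_div_iff₀ hT').2 (by linarith))
      have hb1 : ∀ t < T, |Llam (θs t) (fun i => ∑ j, M' i j * lams t j)| ≤ BΔ := by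
        intro t ht
        refine habs t ht _ (fun i => Finset.sum_nonneg fun j _ =>
          mul_nonneg ((hM' j).1 i) (hlnn t ht j)) ?_
        calc ∑ i : Fin (m + 1), ∑ j, M' i j * lams t j
            = ∑ j, ∑ i : Fin (m + 1), M' i j * lams t j := Finset.sum_comm
          _ = ∑ j, lams t j := by
              refine Finset.sum_congr rfl fun j _ => ?_
              rw [← Finset.sum_mul, (hM' j).2, one_mul]
          _ ≤ 1 := le_of_eq (hlsum t ht)
      have hb2 : ∀ t < T, |Llam (θs t) (lams t)| ≤ BΔ := by
        intro t ht
        exact habs t ht _ (hlnn t ht) (le_of_eq (hlsum t ht))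
      have hA : ∑ t ∈ Finset.range T, Llam (θs t) (fun i => ∑ j, M' i j * lams t j)
          ≤ T * BΔ := by
        calc ∑ t ∈ Finset.range T, Llam (θs t) (fun i => ∑ j, M' i j * lams t j)
            ≤ ∑ t ∈ Finset.range T, BΔ := Finset.sum_le_sum fun t ht =>
              le_trans (le_abs_self _) (hb1 t (Finset.mem_range.1 ht))
          _ = T * BΔ := by rw [Finset.sum_const, Finset.card_range, nsmul_eq_mul]
      have hB : -(T * BΔ) ≤ ∑ t ∈ Finset.range T, Llam (θs t) (lams t) := by
        calc -((T : ℝ) * BΔ) = ∑ t ∈ Finset.range T, (-BΔ) := by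
              rw [Finset.sum_const, Finset.card_range, nsmul_eq_mul]; ring
          _ ≤ ∑ t ∈ Finset.range T, Llam (θs t) (lams t) :=
            Finset.sum_le_sum fun t ht =>
              (abs_le.1 (hb2 t (Finset.mem_range.1 ht))).1
      have e1 : (1 / (T : ℝ)) * ∑ t ∈ Finset.range T,
          Llam (θs t) (fun i => ∑ j, M' i j * lams t j) ≤ BΔ := by
        calc (1 / (T : ℝ)) * ∑ t ∈ Finset.range T,
            Llam (θs t) (fun i => ∑ j, M' i j * lams t j)
            ≤ (1 / (T : ℝ)) * (T * BΔ) := by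
              exact mul_le_mul_of_nonneg_left hA (by positivity)
          _ = BΔ := by field_simp
      have e2 : -BΔ ≤ (1 / (T : ℝ)) * ∑ t ∈ Finset.range T, Llam (θs t) (lams t) := by
        calc -BΔ = (1 / (T : ℝ)) * (-(T * BΔ)) := by
              field_simp
          _ ≤ (1 / (T : ℝ)) * ∑ t ∈ Finset.range T, Llam (θs t) (lams t) :=
            mul_le_mul_of_nonneg_left hB (by positivity)
      nlinarith [hs1, hB0]
    · -- main case : K < T
      have hKT' : K < T := not_le.1 hKT
      -- closed form for the matrices
      have hMform : ∀ t, t ≤ T → ∀ i j, Ms t i j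
          = Real.exp (η * ∑ s ∈ Finset.range t, Δs s i * lams s j)
            / ∑ k, Real.exp (η * ∑ s ∈ Finset.range t, Δs s k * lams s j) := by
        intro t
        induction t with
        | zero =>
          intro _ i j
          rw [hMinit]
          simp
        | succ t ih =>
          intro h1 i j
          have htT : t < T := Nat.lt_of_succ_le h1
          have ih' := ih htT.le
          have hD : (0 : ℝ) < ∑ k, Real.exp (η * ∑ s ∈ Finset.range t, Δs s k * lams s j) :=
            Finset.sum_pos (fun k _ => Real.exp_pos _) Finset.univ_nonempty
          have hE : (0 : ℝ) < ∑ k, Real.exp (η * ∑ s ∈ Finset.range (t + 1), Δs s k * lams s j) :=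
            Finset.sum_pos (fun k _ => Real.exp_pos _) Finset.univ_nonempty
          have hnum : ∀ k, Ms t k j * Real.exp (η * (Δs t k * lams t j))
              = Real.exp (η * ∑ s ∈ Finset.range (t + 1), Δs s k * lams s j)
                / ∑ k', Real.exp (η * ∑ s ∈ Finset.range t, Δs s k' * lams s j) := by
            intro k
            rw [ih' k j, Finset.sum_range_succ, mul_add, Real.exp_add]
            ring
          rw [hupdate t htT i j, hnum i,
            Finset.sum_congr rfl fun k _ => hnum k, ← Finset.sum_div]
          rw [div_div_div_cancel_right₀]
          exact hD.ne'
      -- step size facts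
      have hη' : η = Real.sqrt (K / T) / BΔ := by
        rw [hη, ← div_div, Real.sqrt_div (by positivity), Real.sqrt_sq hB0]
      set s := Real.sqrt (K / (T : ℝ)) with hsdef
      have hKTnn : (0 : ℝ) ≤ K / T := le_of_lt (div_pos hKpos hT')
      have hspos : 0 < s := Real.sqrt_pos.2 (div_pos hKpos hT')
      have hs1 : s ≤ 1 := by
        rw [hsdef, show (1 : ℝ) = Real.sqrt 1 from Real.sqrt_one.symm]
        exact Real.sqrt_le_sqrt ((div_le_one hT').2 hKT'.le)
      have hsq : s ^ 2 = K / T := Real.sq_sqrt hKTnn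
      have hηpos : 0 < η := by rw [hη']; positivity
      have hηB : η * BΔ = s := by rw [hη']; field_simp
      -- rewrite the two Llam sums
      have hR1 : ∀ t < T, Llam (θs t) (fun i => ∑ j, M' i j * lams t j)
          = ∑ j, ∑ i, M' i j * (Δs t i * lams t j) := by
        intro t ht
        have hswap : ∑ j, ∑ i, M' i j * (Δs t i * lams t j)
            = ∑ i, ∑ j, M' i j * (Δs t i * lams t j) := Finset.sum_comm
        rw [hLlam, hswap, Fin.sum_univ_succ]
        simp only [hΔ0, zero_mul, mul_zero, Finset.sum_const_zero, zero_add]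
        refine Finset.sum_congr rfl fun i _ => ?_
        rw [← hΔsucc t i, Finset.sum_mul]
        exact Finset.sum_congr rfl fun j _ => by ring
      have hR2 : ∀ t < T, Llam (θs t) (lams t)
          = ∑ j, ∑ i, Ms t i j * (Δs t i * lams t j) := by
        intro t ht
        have hswap : ∑ j, ∑ i, Ms t i j * (Δs t i * lams t j)
            = ∑ i, Δs t i * ∑ j, Ms t i j * lams t j := by
          rw [Finset.sum_comm]
          refine Finset.sum_congr rfl fun i _ => ?_
          rw [Finset.mul_sum]
          exact Finset.sum_congr rfl fun j _ => by ring
        have hstat' : ∑ i : Fin (m + 1), Δs t i * ∑ j, Ms t i j * lams t j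
            = ∑ i : Fin (m + 1), Δs t i * lams t i :=
          Finset.sum_congr rfl fun i _ => by rw [(hstat t ht).2 i]
        rw [hLlam, hswap, hstat', Fin.sum_univ_succ]
        simp only [hΔ0, zero_mul, zero_add]
        exact Finset.sum_congr rfl fun i _ => by rw [hΔsucc t i]; ring
      -- per-column hedge bound
      have hcol : ∀ j, ∑ t ∈ Finset.range T, ∑ i, M' i j * (Δs t i * lams t j)
          - ∑ t ∈ Finset.range T, ∑ i, Ms t i j * (Δs t i * lams t j)
          ≤ Real.log ((m : ℝ) + 1) / η + η * ∑ t ∈ Finset.range T, (BΔ * lams t j) ^ 2 := by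
        intro j
        obtain ⟨i0, -, hi0⟩ := Finset.exists_max_image (Finset.univ : Finset (Fin (m + 1)))
          (fun i => ∑ t ∈ Finset.range T, Δs t i * lams t j) Finset.univ_nonempty
        have hhedge := hedge_regret m T η hηpos (fun t i => Δs t i * lams t j)
          (fun t => BΔ * lams t j)
          (by
            intro t ht i
            rw [abs_mul, abs_of_nonneg (hlnn t ht j)]
            exact mul_le_mul_of_nonneg_right (hBΔ t ht i) (hlnn t ht j))
          (by
            intro t ht i
            rw [abs_mul, abs_mul, abs_of_nonneg hηpos.le, abs_of_nonneg (hlnn t ht j)]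
            calc η * (|Δs t i| * lams t j) ≤ η * (BΔ * 1) := by
                  refine mul_le_mul_of_nonneg_left ?_ hηpos.le
                  exact mul_le_mul (hBΔ t ht i) (hlle1 t ht j) (hlnn t ht j) hB0
              _ = s := by rw [mul_one, hηB]
              _ ≤ 1 := hs1)
          i0
        have h1 : ∑ t ∈ Finset.range T, ∑ i, M' i j * (Δs t i * lams t j)
            ≤ ∑ t ∈ Finset.range T, Δs t i0 * lams t j := by
          rw [Finset.sum_comm]
          calc ∑ i, ∑ t ∈ Finset.range T, M' i j * (Δs t i * lams t j)
              = ∑ i, M' i j * ∑ t ∈ Finset.range T, Δs t i * lams t j := by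
                exact Finset.sum_congr rfl fun i _ => (Finset.mul_sum _ _ _).symm
            _ ≤ ∑ i, M' i j * ∑ t ∈ Finset.range T, Δs t i0 * lams t j :=
                Finset.sum_le_sum fun i _ =>
                  mul_le_mul_of_nonneg_left (hi0 i (Finset.mem_univ i)) ((hM' j).1 i)
            _ = ∑ t ∈ Finset.range T, Δs t i0 * lams t j := by
                rw [← Finset.sum_mul, (hM' j).2, one_mul]
        have h2 : ∑ t ∈ Finset.range T, ∑ i, Ms t i j * (Δs t i * lams t j)
            = ∑ t ∈ Finset.range T, ∑ i,
                (Real.exp (η * ∑ s' ∈ Finset.range t, Δs s' i * lams s' j)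
                  / ∑ k, Real.exp (η * ∑ s' ∈ Finset.range t, Δs s' k * lams s' j))
                * (Δs t i * lams t j) := by
          refine Finset.sum_congr rfl fun t ht => Finset.sum_congr rfl fun i _ => ?_
          rw [hMform t (Finset.mem_range.1 ht).le i j]
        rw [h2]
        linarith [hhedge, h1]
      -- sum over columns
      have hlamsq : ∀ t < T, ∑ j, (lams t j) ^ 2 ≤ 1 := by
        intro t ht
        calc ∑ j, (lams t j) ^ 2 ≤ ∑ j, lams t j := by
              refine Finset.sum_le_sum fun j _ => ?_
              nlinarith [hlnn t ht j, hlle1 t ht j]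
          _ = 1 := hlsum t ht
      have hsumcol : ∑ j, (∑ t ∈ Finset.range T, ∑ i, M' i j * (Δs t i * lams t j)
            - ∑ t ∈ Finset.range T, ∑ i, Ms t i j * (Δs t i * lams t j))
          ≤ K / η + η * BΔ ^ 2 * T := by
        calc ∑ j, (∑ t ∈ Finset.range T, ∑ i, M' i j * (Δs t i * lams t j)
              - ∑ t ∈ Finset.range T, ∑ i, Ms t i j * (Δs t i * lams t j))
            ≤ ∑ j : Fin (m + 1), (Real.log ((m : ℝ) + 1) / η
                + η * ∑ t ∈ Finset.range T, (BΔ * lams t j) ^ 2) :=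
              Finset.sum_le_sum fun j _ => hcol j
          _ = ((m : ℝ) + 1) * (Real.log ((m : ℝ) + 1) / η)
              + η * ∑ j, ∑ t ∈ Finset.range T, (BΔ * lams t j) ^ 2 := by
              rw [Finset.sum_add_distrib, Finset.sum_const, Finset.card_univ,
                Fintype.card_fin, ← Finset.mul_sum, nsmul_eq_mul]
              push_cast
              ring
          _ ≤ K / η + η * BΔ ^ 2 * T := by
              have hinner : ∑ j, ∑ t ∈ Finset.range T, (BΔ * lams t j) ^ 2
                  ≤ BΔ ^ 2 * T := by
                rw [Finset.sum_comm]
                calc ∑ t ∈ Finset.range T, ∑ j, (BΔ * lams t j) ^ 2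
                    ≤ ∑ t ∈ Finset.range T, BΔ ^ 2 := by
                      refine Finset.sum_le_sum fun t ht => ?_
                      have : ∑ j, (BΔ * lams t j) ^ 2
                          = BΔ ^ 2 * ∑ j, (lams t j) ^ 2 := by
                        rw [Finset.mul_sum]
                        exact Finset.sum_congr rfl fun j _ => by ring
                      rw [this]
                      nlinarith [hlamsq t (Finset.mem_range.1 ht), sq_nonneg BΔ]
                  _ = BΔ ^ 2 * T := by
                      rw [Finset.sum_const, Finset.card_range, nsmul_eq_mul]; ring
              have hKeq : ((m : ℝ) + 1) * (Real.log ((m : ℝ) + 1) / η) = K / η := by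
                rw [hK]; ring
              rw [hKeq]
              have := mul_le_mul_of_nonneg_left hinner hηpos.le
              linarith
      -- arithmetic
      have harith : K / η + η * BΔ ^ 2 * T = 2 * BΔ * s * T := by
        have hKeq : K = s ^ 2 * T := by
          rw [hsq]; field_simp
        rw [hKeq, hη']
        field_simp
        ring
      -- assemble
      have hdiff : ∑ t ∈ Finset.range T, Llam (θs t) (fun i => ∑ j, M' i j * lams t j)
          - ∑ t ∈ Finset.range T, Llam (θs t) (lams t)
          ≤ 2 * BΔ * s * T := by
        rw [Finset.sum_congr rfl fun t ht => hR1 t (Finset.mem_range.1 ht),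
          Finset.sum_congr rfl fun t ht => hR2 t (Finset.mem_range.1 ht),
          Finset.sum_comm, Finset.sum_comm (s := Finset.range T),
          ← Finset.sum_sub_distrib]
        rw [← harith]
        exact hsumcol
      calc (1 / (T : ℝ)) * ∑ t ∈ Finset.range T,
            Llam (θs t) (fun i => ∑ j, M' i j * lams t j)
          - (1 / (T : ℝ)) * ∑ t ∈ Finset.range T, Llam (θs t) (lams t)
          = (1 / (T : ℝ)) * (∑ t ∈ Finset.range T,
              Llam (θs t) (fun i => ∑ j, M' i j * lams t j)
            - ∑ t ∈ Finset.range T, Llam (θs t) (lams t)) := by ring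
        _ ≤ (1 / (T : ℝ)) * (2 * BΔ * s * T) :=
            mul_le_mul_of_nonneg_left hdiff (by positivity)
        _ = 2 * BΔ * s := by field_simp
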